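/- arXiv:1409.8183 — 2 statements merged into one kernel-verified Lean document; each statement's English description precedes it below -/
import Mathlib

section
/- (Proposition 2.) Let W ⊆ ℝ^{m_w}, let μ be a probability measure on ℝ^{m_w} with μ(W) = 1, and let f(x,w) = A_cl x + B_w w. Suppose X_T ⊆ ℝ^n satisfies: (i) for all x ∈ X_T and all w ∈ W, f(x,w) ∈ X_T (robust positive invariance under the local control law u = Kx); and (ii) for all x ∈ X_T and each row index j, μ({ w : H_j f(x,w) ≤ h_j }) ≥ 1 − ε_j. Then for every initial state x_0 ∈ X_T, every k ≥ 1 and every j, the closed-loop state x_k(w_0,...,w_{k-1}) defined by x_{i+1} = f(x_i, w_i) satisfies μ^k({ (w_0,...,w_{k-1}) : H_j x_k ≤ h_j }) ≥ 1 − ε_j, where μ^k is the k-fold product measure. -/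
open Matrix MeasureTheory

/-- Closed-loop state `x_k` as a function of the disturbance tuple
`(w_0, ..., w_{k-1})`, for the dynamics `x_{i+1} = A_cl x_i + B_w w_i`. -/
def closedLoopState {n mw : ℕ} (Acl : Matrix (Fin n) (Fin n) ℝ)
    (Bw : Matrix (Fin n) (Fin mw) ℝ) (x0 : Fin n → ℝ) :
    (k : ℕ) → (Fin k → (Fin mw → ℝ)) → (Fin n → ℝ)
  | 0, _ => x0
  | k + 1, ws =>
      Acl.mulVec (closedLoopState Acl Bw x0 k (fun i => ws i.castSucc))
        + Bw.mulVec (ws (Fin.last k))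

/-- `mulVec` is measurable. -/
lemma measurable_mulVec' {a b : ℕ} (M : Matrix (Fin a) (Fin b) ℝ) :
    Measurable fun v : Fin b → ℝ => M.mulVec v := by
  have h : Continuous fun v : Fin b → ℝ => M.mulVecLin v :=
    M.mulVecLin.continuous_of_finiteDimensional
  simpa [Matrix.mulVecLin_apply] using h.measurable

/-- Dot product with a fixed vector is measurable. -/
lemma measurable_dotProduct' {a : ℕ} (v : Fin a → ℝ) :
    Measurable fun y : Fin a → ℝ => v ⬝ᵥ y := by
  unfold dotProduct
  exact Finset.measurable_sum _ fun i _ => measurable_const.mul (measurable_pi_apply i)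

lemma measurable_closedLoopState {n mw : ℕ} (Acl : Matrix (Fin n) (Fin n) ℝ)
    (Bw : Matrix (Fin n) (Fin mw) ℝ) (x0 : Fin n → ℝ) :
    ∀ k, Measurable (closedLoopState Acl Bw x0 k) := by
  intro k
  induction k with
  | zero => exact measurable_const
  | succ k ih =>
    have h1 : Measurable fun ws : Fin (k + 1) → (Fin mw → ℝ) =>
        (fun i : Fin k => ws i.castSucc) :=
      measurable_pi_lambda _ fun i => measurable_pi_apply _
    exact ((measurable_mulVec' Acl).comp (ih.comp h1)).add
      ((measurable_mulVec' Bw).comp (measurable_pi_apply _))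

/-- Any measurable superset of `W^l` has full product measure, even if `W`
itself is not measurable. -/
lemma pi_measure_eq_one_of_superset {α : Type*} [MeasurableSpace α]
    (μ : Measure α) [IsProbabilityMeasure μ] (W : Set α) (hW : μ W = 1) :
    ∀ (l : ℕ) (E : Set (Fin l → α)), MeasurableSet E →
      {ws | ∀ i, ws i ∈ W} ⊆ E → Measure.pi (fun _ : Fin l => μ) E = 1 := by
  intro l
  induction l with
  | zero =>
    intro E hE hsub
    have huniv : (Set.univ : Set (Fin 0 → α)) ⊆ E := fun ws _ => hsub fun i => i.elim0
    rw [Set.eq_univ_of_univ_subset huniv]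
    exact measure_univ
  | succ l ih =>
    intro E hE hsub
    set ν := Measure.pi (fun _ : Fin l => μ) with hν
    set e := MeasurableEquiv.piFinSuccAbove (fun _ : Fin (l + 1) => α) 0 with he
    have hpres : MeasurePreserving e.symm (μ.prod ν)
        (Measure.pi fun _ : Fin (l + 1) => μ) :=
      (measurePreserving_piFinSuccAbove (fun _ : Fin (l + 1) => μ) 0).symm e
    have hkey : Measure.pi (fun _ : Fin (l + 1) => μ) E = (μ.prod ν) (e.symm ⁻¹' E) :=
      (hpres.measure_preimage hE.nullMeasurableSet).symm
    have hs : MeasurableSet (e.symm ⁻¹' E) := e.symm.measurable hE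
    refine le_antisymm prob_le_one ?_
    rw [hkey, Measure.prod_apply hs]
    -- the section at any `w ∈ W` has `ν`-measure `1`
    have hsec : ∀ w ∈ W, ν (Prod.mk w ⁻¹' (e.symm ⁻¹' E)) = 1 := by
      intro w hw
      refine ih _ (measurable_prodMk_left hs) ?_
      intro ws' hws'
      simp only [Set.mem_preimage]
      refine hsub ?_
      intro i
      have : e.symm (w, ws') = Fin.insertNth 0 w ws' := by
        simp [he, MeasurableEquiv.piFinSuccAbove_symm_apply, Fin.insertNthEquiv]
      rw [this, Fin.insertNth_zero]
      refine Fin.cases ?_ ?_ i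
      · simpa using hw
      · intro j; simpa using hws' j
    have hmeas : Measurable fun w => ν (Prod.mk w ⁻¹' (e.symm ⁻¹' E)) :=
      measurable_measure_prodMk_left hs
    set G : Set α := {w | 1 ≤ ν (Prod.mk w ⁻¹' (e.symm ⁻¹' E))} with hG
    have hGmeas : MeasurableSet G := hmeas measurableSet_Ici
    have hWG : W ⊆ G := fun w hw => by simp [hG, hsec w hw]
    have hGone : μ G = 1 := le_antisymm prob_le_one (hW ▸ measure_mono hWG)
    have h1 : (1 : ENNReal) = ∫⁻ _ in G, 1 ∂μ := by
      rw [setLIntegral_const, one_mul, hGone]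
    calc (1 : ENNReal) = ∫⁻ _ in G, 1 ∂μ := h1
      _ ≤ ∫⁻ w in G, ν (Prod.mk w ⁻¹' (e.symm ⁻¹' E)) ∂μ :=
        setLIntegral_mono' hGmeas fun w hw => hw
      _ ≤ ∫⁻ w, ν (Prod.mk w ⁻¹' (e.symm ⁻¹' E)) ∂μ := setLIntegral_le_lintegral _ _

/-- Proposition 2: if `X_T` is robust positive invariant for
`f(x,w) = A_cl x + B_w w` with disturbances supported in `W`, and from every
point of `X_T` each row chance constraint holds one step ahead, then along the
closed loop starting in `X_T` every chance constraint
`μ^k{ H_j x_k ≤ h_j } ≥ 1 − ε_j` holds for all `k ≥ 1`. -/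
theorem terminal_set_closed_loop_chance_constraints
    {n m mw : ℕ} {ι : Type*}
    (A : Matrix (Fin n) (Fin n) ℝ) (B : Matrix (Fin n) (Fin m) ℝ)
    (Bw : Matrix (Fin n) (Fin mw) ℝ) (K : Matrix (Fin m) (Fin n) ℝ)
    (W : Set (Fin mw → ℝ))
    (μ : Measure (Fin mw → ℝ)) [IsProbabilityMeasure μ]
    (hW : μ W = 1)
    (H : ι → (Fin n → ℝ)) (h : ι → ℝ) (ε : ι → ℝ)
    (hε0 : ∀ j, 0 ≤ ε j) (hε1 : ∀ j, ε j < 1)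
    (XT : Set (Fin n → ℝ))
    (hinv : ∀ x ∈ XT, ∀ w ∈ W, (A + B * K).mulVec x + Bw.mulVec w ∈ XT)
    (hchance : ∀ x ∈ XT, ∀ j,
      ENNReal.ofReal (1 - ε j)
        ≤ μ {w | H j ⬝ᵥ ((A + B * K).mulVec x + Bw.mulVec w) ≤ h j}) :
    ∀ x0 ∈ XT, ∀ k, 1 ≤ k → ∀ j,
      ENNReal.ofReal (1 - ε j)
        ≤ Measure.pi (fun _ : Fin k => μ)
            {ws | H j ⬝ᵥ closedLoopState (A + B * K) Bw x0 k ws ≤ h j} := by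
  intro x0 hx0 k hk j
  set Acl := A + B * K with hAcl
  -- the state stays in XT for disturbances in W
  have hstate : ∀ (l : ℕ) (ws : Fin l → (Fin mw → ℝ)), (∀ i, ws i ∈ W) →
      closedLoopState Acl Bw x0 l ws ∈ XT := by
    intro l
    induction l with
    | zero => intro ws _; exact hx0
    | succ l ih =>
      intro ws hws
      exact hinv _ (ih _ fun i => hws i.castSucc) _ (hws (Fin.last l))
  obtain ⟨l, rfl⟩ : ∃ l, k = l + 1 := ⟨k - 1, by omega⟩
  set ν := Measure.pi (fun _ : Fin l => μ) with hν
  set e := MeasurableEquiv.piFinSuccAbove (fun _ : Fin (l + 1) => (Fin mw → ℝ))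
    (Fin.last l) with he
  set S : Set (Fin (l + 1) → (Fin mw → ℝ)) :=
    {ws | H j ⬝ᵥ closedLoopState Acl Bw x0 (l + 1) ws ≤ h j} with hS
  have hSmeas : MeasurableSet S :=
    measurableSet_le ((measurable_dotProduct' (H j)).comp
      (measurable_closedLoopState Acl Bw x0 (l + 1))) measurable_const
  have hpres : MeasurePreserving e.symm (μ.prod ν)
      (Measure.pi fun _ : Fin (l + 1) => μ) :=
    (measurePreserving_piFinSuccAbove (fun _ : Fin (l + 1) => μ) (Fin.last l)).symm e
  have hkey : Measure.pi (fun _ : Fin (l + 1) => μ) S = (μ.prod ν) (e.symm ⁻¹' S) :=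
    (hpres.measure_preimage hSmeas.nullMeasurableSet).symm
  have hs : MeasurableSet (e.symm ⁻¹' S) := e.symm.measurable hSmeas
  -- the section at a fixed disturbance history `ws'`
  have hsec : ∀ ws' : Fin l → (Fin mw → ℝ),
      (fun w => (w, ws')) ⁻¹' (e.symm ⁻¹' S)
        = {w | H j ⬝ᵥ (Acl.mulVec (closedLoopState Acl Bw x0 l ws') + Bw.mulVec w)
            ≤ h j} := by
    intro ws'
    ext w
    have heq : e.symm (w, ws') = Fin.insertNth (Fin.last l) w ws' := by
      simp [he, MeasurableEquiv.piFinSuccAbove_symm_apply, Fin.insertNthEquiv]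
    have h1 : (fun i : Fin l => e.symm (w, ws') i.castSucc) = ws' := by
      funext i
      rw [heq, ← Fin.succAbove_last_apply i, Fin.insertNth_apply_succAbove]
    have h2 : e.symm (w, ws') (Fin.last l) = w := by
      rw [heq, Fin.insertNth_apply_same]
    simp only [Set.mem_preimage, hS, Set.mem_setOf_eq, closedLoopState, h1, h2]
  rw [hkey, Measure.prod_apply_symm hs]
  have hmeas : Measurable fun ws' => μ ((fun w => (w, ws')) ⁻¹' (e.symm ⁻¹' S)) :=
    measurable_measure_prodMk_right hs
  set c : ENNReal := ENNReal.ofReal (1 - ε j) with hc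
  set G : Set (Fin l → (Fin mw → ℝ)) :=
    {ws' | c ≤ μ ((fun w => (w, ws')) ⁻¹' (e.symm ⁻¹' S))} with hG
  have hGmeas : MeasurableSet G := hmeas measurableSet_Ici
  have hWG : {ws' : Fin l → (Fin mw → ℝ)| ∀ i, ws' i ∈ W} ⊆ G := by
    intro ws' hws'
    have hx : closedLoopState Acl Bw x0 l ws' ∈ XT := hstate l ws' hws'
    have := hchance _ hx j
    simpa [hG, hsec ws'] using this
  have hGone : ν G = 1 := pi_measure_eq_one_of_superset μ W hW l G hGmeas hWG
  calc c = c * ν G := by rw [hGone, mul_one]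
    _ = ∫⁻ _ in G, c ∂ν := (setLIntegral_const _ _).symm
    _ ≤ ∫⁻ ws' in G, μ ((fun w => (w, ws')) ⁻¹' (e.symm ⁻¹' S)) ∂ν :=
      setLIntegral_mono' hGmeas fun ws' hws' => hws'
    _ ≤ ∫⁻ ws', μ ((fun w => (w, ws')) ⁻¹' (e.symm ⁻¹' S)) ∂ν :=
      setLIntegral_le_lintegral _ _
end

section
/- (Expected cost of the shifted candidate sequence.) Let z_{l+1} = A z_l + B v_l for l = 0,...,T−1 with z_0 ∈ ℝ^n and inputs v_0,...,v_{T−1} ∈ ℝ^m, and define J_T(x, (v_l)) = Σ_{l=0}^{T−1} (z_lᵀ Q z_l + v_lᵀ R v_l) + z_Tᵀ P z_T where z_0 = x. Let P satisfy A_clᵀ P A_cl + Q + Kᵀ R K = P with A_cl = A + B K. Let w be an ℝ^{m_w}-valued random vector with E[w] = 0 and finite second moments, and set d = B_w w. Define the candidate inputs v_l'(d) = v_{l+1} + K A_cl^l d for l = 0,...,T−2 and v_{T−1}'(d) = K (z_T + A_cl^{T−1} d). Then E[ J_T( z_1 + d, (v_l'(d)) ) ] = J_T(z_0, (v_l)) −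 z_0ᵀ Q z_0 − v_0ᵀ R v_0 + E[ dᵀ P d ]. -/
open Matrix Finset MeasureTheory

/-- Nominal trajectory `z_{l+1} = A z_l + B v_l` with `z_0 = x`. -/
def nomTraj {n m : ℕ} (A : Matrix (Fin n) (Fin n) ℝ) (B : Matrix (Fin n) (Fin m) ℝ)
    (x : Fin n → ℝ) (v : ℕ → Fin m → ℝ) : ℕ → (Fin n → ℝ)
  | 0 => x
  | l + 1 => A.mulVec (nomTraj A B x v l) + B.mulVec (v l)

/-- Finite-horizon cost `J_T(x, (v_l)) = ∑_{l<T} (z_lᵀ Q z_l + v_lᵀ R v_l) + z_Tᵀ P z_T`. -/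
def costJ {n m : ℕ} (A : Matrix (Fin n) (Fin n) ℝ) (B : Matrix (Fin n) (Fin m) ℝ)
    (Q P : Matrix (Fin n) (Fin n) ℝ) (R : Matrix (Fin m) (Fin m) ℝ)
    (T : ℕ) (x : Fin n → ℝ) (v : ℕ → Fin m → ℝ) : ℝ :=
  (∑ l ∈ Finset.range T,
      (nomTraj A B x v l ⬝ᵥ Q.mulVec (nomTraj A B x v l) + v l ⬝ᵥ R.mulVec (v l)))
    + nomTraj A B x v T ⬝ᵥ P.mulVec (nomTraj A B x v T)

private lemma dot_shift {a b : ℕ} (M : Matrix (Fin a) (Fin b) ℝ) (u : Fin a → ℝ) (x : Fin b → ℝ) :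
    u ⬝ᵥ M.mulVec x = (Mᵀ.mulVec u) ⬝ᵥ x := by
  rw [Matrix.dotProduct_mulVec, Matrix.mulVec_transpose]

private lemma quad_conj {a b : ℕ} (M : Matrix (Fin a) (Fin b) ℝ) (N : Matrix (Fin a) (Fin a) ℝ)
    (x : Fin b → ℝ) :
    x ⬝ᵥ (Mᵀ * N * M).mulVec x = (M.mulVec x) ⬝ᵥ N.mulVec (M.mulVec x) := by
  rw [Matrix.mul_assoc, ← Matrix.mulVec_mulVec, dot_shift, Matrix.transpose_transpose,
    Matrix.mulVec_mulVec]

private lemma expand_quad {k : ℕ} (M : Matrix (Fin k) (Fin k) ℝ) (a b : Fin k → ℝ) :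
    (a + b) ⬝ᵥ M.mulVec (a + b)
      = a ⬝ᵥ M.mulVec a + a ⬝ᵥ M.mulVec b + b ⬝ᵥ M.mulVec a + b ⬝ᵥ M.mulVec b := by
  simp [Matrix.mulVec_add, dotProduct_add, add_dotProduct]; ring

private lemma sum_dot {k : ℕ} {ι : Type*} (s : Finset ι) (f : ι → Fin k → ℝ) (x : Fin k → ℝ) :
    (∑ i ∈ s, f i) ⬝ᵥ x = ∑ i ∈ s, f i ⬝ᵥ x := by
  simp only [dotProduct, Finset.sum_apply, Finset.sum_mul]
  exact Finset.sum_comm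

private lemma traj_shift {n m : ℕ} (A : Matrix (Fin n) (Fin n) ℝ) (B : Matrix (Fin n) (Fin m) ℝ)
    (K : Matrix (Fin m) (Fin n) ℝ) (S : ℕ) (z0 d : Fin n → ℝ) (v : ℕ → Fin m → ℝ) :
    ∀ l, l ≤ S →
    nomTraj A B (nomTraj A B z0 v 1 + d)
      (fun l => if l = S then K.mulVec (nomTraj A B z0 v (S+1) + ((A+B*K)^S).mulVec d)
                else v (l+1) + K.mulVec (((A+B*K)^l).mulVec d)) l
      = nomTraj A B z0 v (l+1) + ((A+B*K)^l).mulVec d := by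
  intro l hl
  induction l with
  | zero => simp [nomTraj]
  | succ l ih =>
    have hne : l ≠ S := by omega
    have ih' := ih (by omega)
    show A.mulVec _ + B.mulVec _ = _
    simp only [ih']
    rw [if_neg hne]
    show A.mulVec _ + B.mulVec _ = (A.mulVec (nomTraj A B z0 v (l+1)) + B.mulVec (v (l+1))) + _
    simp only [Matrix.mulVec_add, Matrix.add_mulVec, pow_succ', ← Matrix.mulVec_mulVec,
      Matrix.add_mulVec]
    abel

private def crossVec {n m mw : ℕ} (A : Matrix (Fin n) (Fin n) ℝ) (B : Matrix (Fin n) (Fin m) ℝ)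
    (Bw : Matrix (Fin n) (Fin mw) ℝ) (K : Matrix (Fin m) (Fin n) ℝ)
    (Q P : Matrix (Fin n) (Fin n) ℝ) (R : Matrix (Fin m) (Fin m) ℝ)
    (S : ℕ) (z0 : Fin n → ℝ) (v : ℕ → Fin m → ℝ) : Fin mw → ℝ :=
  (∑ l ∈ Finset.range S,
     ((Q * ((A+B*K)^l * Bw))ᵀ.mulVec (nomTraj A B z0 v (l+1))
      + ((A+B*K)^l * Bw)ᵀ.mulVec (Q.mulVec (nomTraj A B z0 v (l+1)))
      + (R * (K * ((A+B*K)^l * Bw)))ᵀ.mulVec (v (l+1))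
      + (K * ((A+B*K)^l * Bw))ᵀ.mulVec (R.mulVec (v (l+1)))))
  + (P * ((A+B*K)^S * Bw))ᵀ.mulVec (nomTraj A B z0 v (S+1))
  + ((A+B*K)^S * Bw)ᵀ.mulVec (P.mulVec (nomTraj A B z0 v (S+1)))

private lemma cost_shift {n m mw : ℕ} (A : Matrix (Fin n) (Fin n) ℝ) (B : Matrix (Fin n) (Fin m) ℝ)
    (Bw : Matrix (Fin n) (Fin mw) ℝ) (K : Matrix (Fin m) (Fin n) ℝ)
    (Q P : Matrix (Fin n) (Fin n) ℝ) (R : Matrix (Fin m) (Fin m) ℝ)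
    (hLyap : (A + B * K)ᵀ * P * (A + B * K) + Q + Kᵀ * R * K = P)
    (S : ℕ) (z0 : Fin n → ℝ) (v : ℕ → Fin m → ℝ) (x : Fin mw → ℝ) :
    costJ A B Q P R (S+1) (nomTraj A B z0 v 1 + Bw.mulVec x)
      (fun l => if l = S then K.mulVec (nomTraj A B z0 v (S+1) + ((A+B*K)^S).mulVec (Bw.mulVec x))
                else v (l+1) + K.mulVec (((A+B*K)^l).mulVec (Bw.mulVec x)))
    = costJ A B Q P R (S+1) z0 v - z0 ⬝ᵥ Q.mulVec z0 - v 0 ⬝ᵥ R.mulVec (v 0)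
      + (Bw.mulVec x) ⬝ᵥ P.mulVec (Bw.mulVec x)
      + (crossVec A B Bw K Q P R S z0 v) ⬝ᵥ x := by
  set d : Fin n → ℝ := Bw.mulVec x with hd
  set z : ℕ → Fin n → ℝ := nomTraj A B z0 v with hz
  set e : ℕ → Fin n → ℝ := fun l => ((A+B*K)^l).mulVec d with he
  set v' : ℕ → Fin m → ℝ := fun l =>
      if l = S then K.mulVec (z (S+1) + e S) else v (l+1) + K.mulVec (e l) with hv'
  set z' : ℕ → Fin n → ℝ := nomTraj A B (z 1 + d) v' with hz'
  -- basic facts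
  have hesucc : ∀ l, e (l+1) = (A+B*K).mulVec (e l) := by
    intro l
    simp only [he, pow_succ', ← Matrix.mulVec_mulVec]
  have hG : ∀ l, e l = ((A+B*K)^l * Bw).mulVec x := by
    intro l; simp only [he, hd, Matrix.mulVec_mulVec]
  have htraj : ∀ l, l ≤ S → z' l = z (l+1) + e l := fun l hl =>
    traj_shift A B K S z0 d v l hl
  have hquad : ∀ y : Fin n → ℝ,
      y ⬝ᵥ Q.mulVec y + (K.mulVec y) ⬝ᵥ R.mulVec (K.mulVec y)
        = y ⬝ᵥ P.mulVec y - ((A+B*K).mulVec y) ⬝ᵥ P.mulVec ((A+B*K).mulVec y) := by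
    intro y
    have h1 : y ⬝ᵥ P.mulVec y
        = y ⬝ᵥ ((A + B * K)ᵀ * P * (A + B * K) + Q + Kᵀ * R * K).mulVec y := by rw [hLyap]
    rw [Matrix.add_mulVec, Matrix.add_mulVec, dotProduct_add, dotProduct_add,
      quad_conj, quad_conj] at h1
    linarith
  -- terminal state
  have hvS : v' S = K.mulVec (z (S+1) + e S) := by simp [hv']
  have hterm : z' (S+1) = (A+B*K).mulVec (z (S+1) + e S) := by
    show A.mulVec (z' S) + B.mulVec (v' S) = _
    rw [htraj S le_rfl, hvS, Matrix.add_mulVec, ← Matrix.mulVec_mulVec]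
  -- the running sum
  have hsum : ∑ l ∈ Finset.range S, (z' l ⬝ᵥ Q.mulVec (z' l) + v' l ⬝ᵥ R.mulVec (v' l))
      = ∑ l ∈ Finset.range S,
          ((z (l+1) ⬝ᵥ Q.mulVec (z (l+1)) + v (l+1) ⬝ᵥ R.mulVec (v (l+1)))
           + (e l ⬝ᵥ P.mulVec (e l) - e (l+1) ⬝ᵥ P.mulVec (e (l+1)))
           + ((Q * ((A+B*K)^l * Bw))ᵀ.mulVec (z (l+1))
              + ((A+B*K)^l * Bw)ᵀ.mulVec (Q.mulVec (z (l+1)))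
              + (R * (K * ((A+B*K)^l * Bw)))ᵀ.mulVec (v (l+1))
              + (K * ((A+B*K)^l * Bw))ᵀ.mulVec (R.mulVec (v (l+1)))) ⬝ᵥ x) := by
    refine Finset.sum_congr rfl fun l hl => ?_
    have hlS : l < S := Finset.mem_range.mp hl
    have hvl : v' l = v (l+1) + K.mulVec (e l) := by
      simp only [hv']; rw [if_neg hlS.ne]
    rw [htraj l hlS.le, hvl, expand_quad Q, expand_quad R]
    have c1 : z (l+1) ⬝ᵥ Q.mulVec (e l)
        = ((Q * ((A+B*K)^l * Bw))ᵀ.mulVec (z (l+1))) ⬝ᵥ x := by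
      rw [hG, Matrix.mulVec_mulVec, dot_shift]
    have c2 : e l ⬝ᵥ Q.mulVec (z (l+1))
        = (((A+B*K)^l * Bw)ᵀ.mulVec (Q.mulVec (z (l+1)))) ⬝ᵥ x := by
      rw [hG, dotProduct_comm, dot_shift]
    have c3 : v (l+1) ⬝ᵥ R.mulVec (K.mulVec (e l))
        = ((R * (K * ((A+B*K)^l * Bw)))ᵀ.mulVec (v (l+1))) ⬝ᵥ x := by
      rw [hG, Matrix.mulVec_mulVec, Matrix.mulVec_mulVec, dot_shift, Matrix.mul_assoc]
    have c4 : (K.mulVec (e l)) ⬝ᵥ R.mulVec (v (l+1))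
        = ((K * ((A+B*K)^l * Bw))ᵀ.mulVec (R.mulVec (v (l+1)))) ⬝ᵥ x := by
      rw [hG, Matrix.mulVec_mulVec, dotProduct_comm, dot_shift]
    have hq := hquad (e l)
    rw [← hesucc l] at hq
    simp only [add_dotProduct] at *
    linarith [c1, c2, c3, c4, hq]
  -- final stage + terminal
  have hfin : (z' S ⬝ᵥ Q.mulVec (z' S) + v' S ⬝ᵥ R.mulVec (v' S))
        + z' (S+1) ⬝ᵥ P.mulVec (z' (S+1))
      = z (S+1) ⬝ᵥ P.mulVec (z (S+1)) + e S ⬝ᵥ P.mulVec (e S)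
        + (((P * ((A+B*K)^S * Bw))ᵀ.mulVec (z (S+1))) ⬝ᵥ x
           + (((A+B*K)^S * Bw)ᵀ.mulVec (P.mulVec (z (S+1)))) ⬝ᵥ x) := by
    rw [htraj S le_rfl, hvS, hterm]
    have hq := hquad (z (S+1) + e S)
    have c5 : z (S+1) ⬝ᵥ P.mulVec (e S)
        = ((P * ((A+B*K)^S * Bw))ᵀ.mulVec (z (S+1))) ⬝ᵥ x := by
      rw [hG, Matrix.mulVec_mulVec, dot_shift]
    have c6 : e S ⬝ᵥ P.mulVec (z (S+1))
        = (((A+B*K)^S * Bw)ᵀ.mulVec (P.mulVec (z (S+1)))) ⬝ᵥ x := by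
      rw [hG, dotProduct_comm, dot_shift]
    rw [expand_quad P (z (S+1)) (e S)] at hq
    linarith [hq, c5, c6]
  -- put it together
  have htele : ∑ l ∈ Finset.range S,
      (e l ⬝ᵥ P.mulVec (e l) - e (l+1) ⬝ᵥ P.mulVec (e (l+1)))
      = d ⬝ᵥ P.mulVec d - e S ⬝ᵥ P.mulVec (e S) := by
    rw [Finset.sum_range_sub' (fun l => e l ⬝ᵥ P.mulVec (e l)) S]
    simp [he]
  have hshift : ∑ l ∈ Finset.range (S+1), (z l ⬝ᵥ Q.mulVec (z l) + v l ⬝ᵥ R.mulVec (v l))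
      = (∑ l ∈ Finset.range S, (z (l+1) ⬝ᵥ Q.mulVec (z (l+1)) + v (l+1) ⬝ᵥ R.mulVec (v (l+1))))
        + (z0 ⬝ᵥ Q.mulVec z0 + v 0 ⬝ᵥ R.mulVec (v 0)) := by
    rw [Finset.sum_range_succ' (fun l => z l ⬝ᵥ Q.mulVec (z l) + v l ⬝ᵥ R.mulVec (v l)) S]
    rfl
  have hcross : (crossVec A B Bw K Q P R S z0 v) ⬝ᵥ x
      = (∑ l ∈ Finset.range S,
          ((Q * ((A+B*K)^l * Bw))ᵀ.mulVec (z (l+1))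
              + ((A+B*K)^l * Bw)ᵀ.mulVec (Q.mulVec (z (l+1)))
              + (R * (K * ((A+B*K)^l * Bw)))ᵀ.mulVec (v (l+1))
              + (K * ((A+B*K)^l * Bw))ᵀ.mulVec (R.mulVec (v (l+1)))) ⬝ᵥ x)
        + (((P * ((A+B*K)^S * Bw))ᵀ.mulVec (z (S+1))) ⬝ᵥ x
           + (((A+B*K)^S * Bw)ᵀ.mulVec (P.mulVec (z (S+1)))) ⬝ᵥ x) := by
    simp only [crossVec, add_dotProduct, sum_dot, hz]
    ring
  show (∑ l ∈ Finset.range (S+1), (z' l ⬝ᵥ Q.mulVec (z' l) + v' l ⬝ᵥ R.mulVec (v' l)))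
      + z' (S+1) ⬝ᵥ P.mulVec (z' (S+1))
    = ((∑ l ∈ Finset.range (S+1), (z l ⬝ᵥ Q.mulVec (z l) + v l ⬝ᵥ R.mulVec (v l)))
      + z (S+1) ⬝ᵥ P.mulVec (z (S+1))) - z0 ⬝ᵥ Q.mulVec z0 - v 0 ⬝ᵥ R.mulVec (v 0)
      + d ⬝ᵥ P.mulVec d + (crossVec A B Bw K Q P R S z0 v) ⬝ᵥ x
  rw [Finset.sum_range_succ _ S, hsum]
  simp only [Finset.sum_add_distrib] at hshift ⊢
  rw [htele, hshift, hcross]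
  linarith [hfin]

private lemma memLp_comp_proj {mw : ℕ} {Ω : Type*} [MeasurableSpace Ω] {μ : Measure Ω}
    {w : Ω → (Fin mw → ℝ)} (hL2 : MemLp w 2 μ) (j : Fin mw) :
    MemLp (fun ω => w ω j) 2 μ := by
  exact (ContinuousLinearMap.proj (R := ℝ) (φ := fun _ : Fin mw => ℝ) j).comp_memLp' hL2

private lemma integrable_mul_comp {mw : ℕ} {Ω : Type*} [MeasurableSpace Ω] {μ : Measure Ω}
    {w : Ω → (Fin mw → ℝ)} (hL2 : MemLp w 2 μ) (i j : Fin mw) :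
    Integrable (fun ω => w ω i * w ω j) μ := by
  have h : MemLp ((fun ω => w ω i) • (fun ω => w ω j)) 1 μ :=
    (memLp_comp_proj hL2 j).smul (memLp_comp_proj hL2 i)
  rw [← memLp_one_iff_integrable]
  exact h

private lemma integral_dot_zero {mw : ℕ} {Ω : Type*} [MeasurableSpace Ω] (μ : Measure Ω)
    [IsProbabilityMeasure μ] {w : Ω → (Fin mw → ℝ)} (hL2 : MemLp w 2 μ)
    (hmean : ∫ ω, w ω ∂μ = 0) (c : Fin mw → ℝ) :
    ∫ ω, c ⬝ᵥ w ω ∂μ = 0 := by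
  have hwInt : Integrable w μ := hL2.integrable one_le_two
  have hj : ∀ j, ∫ ω, w ω j ∂μ = 0 := by
    intro j
    have := (ContinuousLinearMap.proj (R := ℝ) (φ := fun _ : Fin mw => ℝ) j).integral_comp_comm hwInt
    simpa [hmean] using this
  have : ∀ ω, c ⬝ᵥ w ω = ∑ j, c j * w ω j := fun ω => rfl
  simp only [this]
  rw [integral_finset_sum]
  · exact Finset.sum_eq_zero fun j _ => by
      rw [MeasureTheory.integral_const_mul, hj j, mul_zero]
  · exact fun j _ => (((memLp_comp_proj hL2 j).integrable one_le_two).const_mul (c j))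

private lemma integrable_lin {mw : ℕ} {Ω : Type*} [MeasurableSpace Ω] {μ : Measure Ω}
    [IsFiniteMeasure μ] {w : Ω → (Fin mw → ℝ)} (hL2 : MemLp w 2 μ) (c : Fin mw → ℝ) :
    Integrable (fun ω => c ⬝ᵥ w ω) μ := by
  have : ∀ ω, c ⬝ᵥ w ω = ∑ j, c j * w ω j := fun ω => rfl
  simp only [this]
  exact integrable_finset_sum _ fun j _ =>
    ((memLp_comp_proj hL2 j).integrable one_le_two).const_mul (c j)

private lemma integrable_quad {n mw : ℕ} {Ω : Type*} [MeasurableSpace Ω] {μ : Measure Ω}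
    {w : Ω → (Fin mw → ℝ)} (hL2 : MemLp w 2 μ)
    (Bw : Matrix (Fin n) (Fin mw) ℝ) (P : Matrix (Fin n) (Fin n) ℝ) :
    Integrable (fun ω => Bw.mulVec (w ω) ⬝ᵥ P.mulVec (Bw.mulVec (w ω))) μ := by
  have key : ∀ y : Fin mw → ℝ, Bw.mulVec y ⬝ᵥ P.mulVec (Bw.mulVec y)
      = ∑ i, ∑ j, (Bwᵀ * P * Bw) i j * (y i * y j) := by
    intro y
    rw [← quad_conj]
    simp only [dotProduct, Matrix.mulVec, dotProduct, Finset.mul_sum]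
    exact Finset.sum_congr rfl fun i _ => Finset.sum_congr rfl fun j _ => by ring
  simp only [key]
  exact integrable_finset_sum _ fun i _ => integrable_finset_sum _ fun j _ =>
    (integrable_mul_comp hL2 i j).const_mul _


/-- expected cost of the shifted candidate sequence:
with `d = B_w w`, candidate inputs `v_l' = v_{l+1} + K A_cl^l d` for
`l < T−1` and `v_{T−1}' = K (z_T + A_cl^{T−1} d)`,
`E[J_T(z_1 + d, (v_l'))] = J_T(z_0, (v_l)) − z_0ᵀ Q z_0 − v_0ᵀ R v_0 + E[dᵀ P d]`. -/
theorem expected_cost_of_shifted_candidate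
    {n m mw : ℕ}
    (A : Matrix (Fin n) (Fin n) ℝ) (B : Matrix (Fin n) (Fin m) ℝ)
    (Bw : Matrix (Fin n) (Fin mw) ℝ) (K : Matrix (Fin m) (Fin n) ℝ)
    (Q P : Matrix (Fin n) (Fin n) ℝ) (R : Matrix (Fin m) (Fin m) ℝ)
    (hQ : Q.IsSymm) (hR : R.IsSymm)
    (hLyap : (A + B * K)ᵀ * P * (A + B * K) + Q + Kᵀ * R * K = P)
    (T : ℕ) (hT : 1 ≤ T)
    (z0 : Fin n → ℝ) (v : ℕ → Fin m → ℝ)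
    {Ω : Type*} [MeasurableSpace Ω] (μ : Measure Ω) [IsProbabilityMeasure μ]
    (w : Ω → (Fin mw → ℝ)) (hmeas : Measurable w)
    (hL2 : MemLp w 2 μ) (hmean : ∫ ω, w ω ∂μ = 0) :
    ∫ ω, costJ A B Q P R T (nomTraj A B z0 v 1 + Bw.mulVec (w ω))
        (fun l =>
          if l = T - 1 then
            K.mulVec (nomTraj A B z0 v T + ((A + B * K) ^ (T - 1)).mulVec (Bw.mulVec (w ω)))
          else
            v (l + 1) + K.mulVec (((A + B * K) ^ l).mulVec (Bw.mulVec (w ω)))) ∂μ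
      = costJ A B Q P R T z0 v - z0 ⬝ᵥ Q.mulVec z0 - v 0 ⬝ᵥ R.mulVec (v 0)
        + ∫ ω, Bw.mulVec (w ω) ⬝ᵥ P.mulVec (Bw.mulVec (w ω)) ∂μ := by
  obtain ⟨S, rfl⟩ : ∃ S, T = S + 1 := ⟨T - 1, (Nat.succ_pred_eq_of_pos hT).symm⟩
  simp only [Nat.add_sub_cancel]
  have hpt := cost_shift A B Bw K Q P R hLyap S z0 v
  simp only [hpt]
  have hIq := integrable_quad hL2 Bw P
  have hIl := integrable_lin hL2 (crossVec A B Bw K Q P R S z0 v)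
  have hCq : Integrable (fun ω => costJ A B Q P R (S+1) z0 v - z0 ⬝ᵥ Q.mulVec z0
        - v 0 ⬝ᵥ R.mulVec (v 0) + Bw.mulVec (w ω) ⬝ᵥ P.mulVec (Bw.mulVec (w ω))) μ :=
    (integrable_const _).add hIq
  have hC : Integrable (fun _ : Ω => costJ A B Q P R (S+1) z0 v - z0 ⬝ᵥ Q.mulVec z0
        - v 0 ⬝ᵥ R.mulVec (v 0)) μ := integrable_const _
  rw [integral_add hCq hIl,
    integral_add hC hIq,
    integral_const, integral_dot_zero μ hL2 hmean]
  simp [measure_univ]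
end
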